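/- Define F : ℝ³ → ℝ by F(d₁, d₂, d₃) = Σ_{i=1}^{3} (1/4)·√(dᵢ²·(dᵢ + 2)·(2 − dᵢ)) + (1/4)·√((d₁ + d₂ + d₃)·(−d₁ + d₂ + d₃)·(d₁ − d₂ + d₃)·(d₁ + d₂ − d₃)). There exist constants c > 0 and ε₀ > 0 such that for every ε with 0 < ε < ε₀ and all d₁, d₂, d₃ ∈ [√3 − ε, √3 + ε], one has F(d₁, d₂, d₃) ≥ 3·√3/2 − c·ε². -/
import Mathlib


/-- The area of the convex hexagon with all sides of length `1` whose three main diagonals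
have lengths `d₁, d₂, d₃`. -/
noncomputable def hexagonArea (d₁ d₂ d₃ : ℝ) : ℝ :=
  (1 / 4) * Real.sqrt (d₁ ^ 2 * (d₁ + 2) * (2 - d₁)) +
  (1 / 4) * Real.sqrt (d₂ ^ 2 * (d₂ + 2) * (2 - d₂)) +
  (1 / 4) * Real.sqrt (d₃ ^ 2 * (d₃ + 2) * (2 - d₃)) +
  (1 / 4) * Real.sqrt ((d₁ + d₂ + d₃) * (-d₁ + d₂ + d₃) * (d₁ - d₂ + d₃) * (d₁ + d₂ - d₃))

private lemma sqrt_lb (x x0 L : ℝ) (hx : 0 ≤ x) (h0 : 0 < x0)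
    (h : x0 * (x - x0) - (x - x0) ^ 2 ≥ 2 * x0 * Real.sqrt x0 * L) :
    Real.sqrt x ≥ Real.sqrt x0 + L := by
  set u := Real.sqrt x with hu
  set v := Real.sqrt x0 with hv
  have hunn : 0 ≤ u := Real.sqrt_nonneg x
  have hvpos : 0 < v := Real.sqrt_pos.2 h0
  have hu2 : u ^ 2 = x := Real.sq_sqrt hx
  have hv2 : v ^ 2 = x0 := Real.sq_sqrt h0.le
  rw [← hu2, ← hv2] at h
  nlinarith [mul_nonneg (mul_nonneg (sq_nonneg (u - v)) hunn)
      (by linarith : (0:ℝ) ≤ u + 2 * v),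
    mul_pos (mul_pos hvpos hvpos) hvpos, sq_nonneg (u - v)]

private lemma sq_bnd {B A : ℝ} (h1 : -A ≤ B) (h2 : B ≤ A) : B ^ 2 ≤ A ^ 2 := by
  nlinarith

private lemma sq_le' {t ε : ℝ} (h1 : -ε ≤ t) (h2 : t ≤ ε) : t ^ 2 ≤ ε ^ 2 := by
  nlinarith

private lemma cube_bnd {t ε : ℝ} (h1 : -ε ≤ t) (h2 : t ≤ ε) :
    -ε ^ 3 ≤ t ^ 3 ∧ t ^ 3 ≤ ε ^ 3 := by
  constructor
  · nlinarith [mul_nonneg (by linarith : (0:ℝ) ≤ ε + t)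
      (by nlinarith [sq_nonneg (2 * ε - t), sq_nonneg t] : (0:ℝ) ≤ ε ^ 2 - ε * t + t ^ 2)]
  · nlinarith [mul_nonneg (by linarith : (0:ℝ) ≤ ε - t)
      (by nlinarith [sq_nonneg (2 * ε + t), sq_nonneg t] : (0:ℝ) ≤ ε ^ 2 + ε * t + t ^ 2)]

private lemma quart_le {t ε : ℝ} (h1 : -ε ≤ t) (h2 : t ≤ ε) : t ^ 4 ≤ ε ^ 4 := by
  nlinarith [sq_le' h1 h2, sq_nonneg t, sq_nonneg ε]

private lemma prod_bnd {a b ε : ℝ} (ha1 : -ε ≤ a) (ha2 : a ≤ ε) (hb1 : -ε ≤ b)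
    (hb2 : b ≤ ε) : -ε ^ 2 ≤ a * b ∧ a * b ≤ ε ^ 2 := by
  have h1 := sq_le' ha1 ha2
  have h2 := sq_le' hb1 hb2
  constructor
  · nlinarith [sq_nonneg (a + b)]
  · nlinarith [sq_nonneg (a - b)]

private lemma mixed_bnd {a b ε : ℝ} (ha1 : -ε ≤ a) (ha2 : a ≤ ε) (hb1 : -ε ≤ b)
    (hb2 : b ≤ ε) : -ε ^ 3 ≤ a * b ^ 2 ∧ a * b ^ 2 ≤ ε ^ 3 := by
  have hb2sq := sq_le' hb1 hb2
  have hε : 0 ≤ ε := by linarith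
  constructor
  · nlinarith [mul_nonneg (by linarith : (0:ℝ) ≤ a + ε) (sq_nonneg b),
      mul_nonneg hε (by linarith : (0:ℝ) ≤ ε ^ 2 - b ^ 2)]
  · nlinarith [mul_nonneg (by linarith : (0:ℝ) ≤ ε - a) (sq_nonneg b),
      mul_nonneg hε (by linarith : (0:ℝ) ≤ ε ^ 2 - b ^ 2)]

private lemma sqprod_le {a b ε : ℝ} (ha1 : -ε ≤ a) (ha2 : a ≤ ε) (hb1 : -ε ≤ b)
    (hb2 : b ≤ ε) : a ^ 2 * b ^ 2 ≤ ε ^ 4 := by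
  have h1 := sq_le' ha1 ha2
  have h2 := sq_le' hb1 hb2
  nlinarith [sq_nonneg a, sq_nonneg b, sq_nonneg ε]

private lemma mul_abs_le {x y X Y : ℝ} (hx0 : 0 ≤ x) (hxX : x ≤ X) (hyl : -Y ≤ y)
    (hyu : y ≤ Y) : -(X * Y) ≤ x * y ∧ x * y ≤ X * Y := by
  have hY : 0 ≤ Y := by linarith
  constructor
  · nlinarith [mul_nonneg hx0 (by linarith : (0:ℝ) ≤ y + Y),
      mul_nonneg (by linarith : (0:ℝ) ≤ X - x) hY]
  · nlinarith [mul_nonneg hx0 (by linarith : (0:ℝ) ≤ Y - y),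
      mul_nonneg (by linarith : (0:ℝ) ≤ X - x) hY]

private lemma eps_pows {ε : ℝ} (h0 : 0 < ε) (h1 : ε < 1 / 10) :
    ε ^ 2 ≤ (1 / 10) * ε ∧ ε ^ 3 ≤ (1 / 10) * ε ^ 2 ∧ ε ^ 4 ≤ (1 / 100) * ε ^ 2 := by
  refine ⟨by nlinarith, by nlinarith, ?_⟩
  nlinarith [mul_nonneg (sq_nonneg ε) (by nlinarith : (0:ℝ) ≤ 1 / 100 - ε ^ 2)]

private lemma gterm (r ε d : ℝ) (hr2 : r ^ 2 = 3) (hrl : 1.7 < r) (hru : r < 1.8)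
    (hε : 0 < ε) (hε0 : ε < 1 / 10) (hdl : r - ε ≤ d) (hdu : d ≤ r + ε) :
    (1 / 4) * Real.sqrt (d ^ 2 * (d + 2) * (2 - d)) ≥ r / 4 - (d - r) / 2 - 5 * ε ^ 2 := by
  obtain ⟨t, rfl⟩ : ∃ t, d = r + t := ⟨d - r, by ring⟩
  have htl : -ε ≤ t := by linarith
  have htu : t ≤ ε := by linarith
  have hr3 : Real.sqrt 3 = r := by
    rw [← hr2]; exact Real.sqrt_sq (by linarith)
  obtain ⟨he2, he3, he4⟩ := eps_pows hε hε0
  have ht2 : t ^ 2 ≤ ε ^ 2 := sq_le' htl htu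
  have ht2n : 0 ≤ t ^ 2 := sq_nonneg t
  have ht3 := cube_bnd htl htu
  have ht4 : t ^ 4 ≤ ε ^ 4 := quart_le htl htu
  have ht4n : 0 ≤ t ^ 4 := by positivity
  have he3n : (0:ℝ) ≤ ε ^ 3 := by positivity
  have he4n : (0:ℝ) ≤ ε ^ 4 := by positivity
  have hrt := mul_abs_le (x := r) (y := t) (X := 1.8) (Y := ε) (by linarith) (by linarith) htl htu
  have hrt3 := mul_abs_le (x := r) (y := t ^ 3) (by linarith) (le_of_lt hru) ht3.1 ht3.2
  have hre2 : 1.7 * ε ^ 2 ≤ r * ε ^ 2 :=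
    mul_le_mul_of_nonneg_right (le_of_lt hrl) (sq_nonneg ε)
  have he3' : ε ^ 3 ≤ (1 / 100) * ε := by nlinarith [he3, he2, hε]
  have he4' : ε ^ 4 ≤ (1 / 1000) * ε := by nlinarith [he4, he2, hε]
  have hBu : 4 * (r * t) + 14 * t ^ 2 + 4 * (r * t ^ 3) + t ^ 4 ≤ 9 * ε := by linarith
  have hBl : -(9 * ε) ≤ 4 * (r * t) + 14 * t ^ 2 + 4 * (r * t ^ 3) + t ^ 4 := by linarith
  have hBsq := sq_bnd hBl hBu
  have hx : (r + t) ^ 2 * ((r + t) + 2) * (2 - (r + t))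
      = 3 - 4 * r * t - 14 * t ^ 2 - 4 * r * t ^ 3 - t ^ 4 := by
    linear_combination (-r ^ 2 - 4 * t * r - 6 * t ^ 2 + 1) * hr2
  have hxnn : 0 ≤ (r + t) ^ 2 * ((r + t) + 2) * (2 - (r + t)) :=
    mul_nonneg (mul_nonneg (sq_nonneg _) (by linarith)) (by linarith)
  have hcond : 3 * ((r + t) ^ 2 * ((r + t) + 2) * (2 - (r + t)) - 3)
      - ((r + t) ^ 2 * ((r + t) + 2) * (2 - (r + t)) - 3) ^ 2
      ≥ 2 * 3 * Real.sqrt 3 * (-2 * t - 20 * ε ^ 2) := by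
    rw [hr3, hx]
    have hexp : 3 * ((3 - 4 * r * t - 14 * t ^ 2 - 4 * r * t ^ 3 - t ^ 4) - 3)
        - ((3 - 4 * r * t - 14 * t ^ 2 - 4 * r * t ^ 3 - t ^ 4) - 3) ^ 2
        = -12 * (r * t) - 42 * t ^ 2 - 12 * (r * t ^ 3) - 3 * t ^ 4
          - (4 * (r * t) + 14 * t ^ 2 + 4 * (r * t ^ 3) + t ^ 4) ^ 2 := by ring
    have hrhs : 2 * 3 * r * (-2 * t - 20 * ε ^ 2)
        = -12 * (r * t) - 120 * (r * ε ^ 2) := by ring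
    rw [hexp, hrhs]
    linarith [hBsq, ht2, hrt3.2, ht4, he3, he4, hre2]
  have := sqrt_lb _ 3 (-2 * t - 20 * ε ^ 2) hxnn (by norm_num) hcond
  rw [hr3] at this
  linarith

set_option maxHeartbeats 1600000 in
private lemma hterm (r ε d₁ d₂ d₃ : ℝ) (hr2 : r ^ 2 = 3) (hrl : 1.7 < r) (hru : r < 1.8)
    (hε : 0 < ε) (hε0 : ε < 1 / 10)
    (h1l : r - ε ≤ d₁) (h1u : d₁ ≤ r + ε)
    (h2l : r - ε ≤ d₂) (h2u : d₂ ≤ r + ε)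
    (h3l : r - ε ≤ d₃) (h3u : d₃ ≤ r + ε) :
    (1 / 4) * Real.sqrt ((d₁ + d₂ + d₃) * (-d₁ + d₂ + d₃) * (d₁ - d₂ + d₃) * (d₁ + d₂ - d₃))
      ≥ 3 * r / 4 + ((d₁ - r) + (d₂ - r) + (d₃ - r)) / 2 - 9 * ε ^ 2 := by
  obtain ⟨t1, rfl⟩ : ∃ t, d₁ = r + t := ⟨d₁ - r, by ring⟩
  obtain ⟨t2, rfl⟩ : ∃ t, d₂ = r + t := ⟨d₂ - r, by ring⟩
  obtain ⟨t3, rfl⟩ : ∃ t, d₃ = r + t := ⟨d₃ - r, by ring⟩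
  have ht1l : -ε ≤ t1 := by linarith
  have ht1u : t1 ≤ ε := by linarith
  have ht2l : -ε ≤ t2 := by linarith
  have ht2u : t2 ≤ ε := by linarith
  have ht3l : -ε ≤ t3 := by linarith
  have ht3u : t3 ≤ ε := by linarith
  have h27 : Real.sqrt 27 = 3 * r := by
    rw [show (27:ℝ) = (3 * r) ^ 2 by linear_combination (-9) * hr2]
    exact Real.sqrt_sq (by linarith)
  obtain ⟨he2, he3, he4⟩ := eps_pows hε hε0
  have hs1 : t1 ^ 2 ≤ ε ^ 2 := sq_le' ht1l ht1u
  have hs2 : t2 ^ 2 ≤ ε ^ 2 := sq_le' ht2l ht2u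
  have hs3 : t3 ^ 2 ≤ ε ^ 2 := sq_le' ht3l ht3u
  have hs1n : 0 ≤ t1 ^ 2 := sq_nonneg t1
  have hs2n : 0 ≤ t2 ^ 2 := sq_nonneg t2
  have hs3n : 0 ≤ t3 ^ 2 := sq_nonneg t3
  have hp12 := prod_bnd ht1l ht1u ht2l ht2u
  have hp13 := prod_bnd ht1l ht1u ht3l ht3u
  have hp23 := prod_bnd ht2l ht2u ht3l ht3u
  have hc1 := cube_bnd ht1l ht1u
  have hc2 := cube_bnd ht2l ht2u
  have hc3 := cube_bnd ht3l ht3u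
  have hm12 := mixed_bnd ht1l ht1u ht2l ht2u
  have hm21 := mixed_bnd ht2l ht2u ht1l ht1u
  have hm13 := mixed_bnd ht1l ht1u ht3l ht3u
  have hm31 := mixed_bnd ht3l ht3u ht1l ht1u
  have hm23 := mixed_bnd ht2l ht2u ht3l ht3u
  have hm32 := mixed_bnd ht3l ht3u ht2l ht2u
  have hq1 : t1 ^ 4 ≤ ε ^ 4 := quart_le ht1l ht1u
  have hq2 : t2 ^ 4 ≤ ε ^ 4 := quart_le ht2l ht2u
  have hq3 : t3 ^ 4 ≤ ε ^ 4 := quart_le ht3l ht3u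
  have hq1n : 0 ≤ t1 ^ 4 := by positivity
  have hq2n : 0 ≤ t2 ^ 4 := by positivity
  have hq3n : 0 ≤ t3 ^ 4 := by positivity
  have hsp12 := sqprod_le ht1l ht1u ht2l ht2u
  have hsp13 := sqprod_le ht1l ht1u ht3l ht3u
  have hsp23 := sqprod_le ht2l ht2u ht3l ht3u
  have hsp12n : 0 ≤ t1 ^ 2 * t2 ^ 2 := by positivity
  have hsp13n : 0 ≤ t1 ^ 2 * t3 ^ 2 := by positivity
  have hsp23n : 0 ≤ t2 ^ 2 * t3 ^ 2 := by positivity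
  have hre2 : 1.7 * ε ^ 2 ≤ r * ε ^ 2 :=
    mul_le_mul_of_nonneg_right (le_of_lt hrl) (sq_nonneg ε)
  have hCl : -(9 * ε ^ 3) ≤ (t1*t2^2 + t2*t1^2 + t1*t3^2 + t3*t1^2 + t2*t3^2 + t3*t2^2 - t1^3 - t2^3 - t3^3) := by linarith [hm12.1, hm21.1, hm13.1, hm31.1, hm23.1,
    hm32.1, hc1.2, hc2.2, hc3.2]
  have hCu : (t1*t2^2 + t2*t1^2 + t1*t3^2 + t3*t1^2 + t2*t3^2 + t3*t2^2 - t1^3 - t2^3 - t3^3) ≤ 9 * ε ^ 3 := by linarith [hm12.2, hm21.2, hm13.2, hm31.2, hm23.2,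
    hm32.2, hc1.1, hc2.1, hc3.1]
  have hrC := mul_abs_le (x := r) (X := 1.8) (Y := 9 * ε ^ 3) (by linarith) (le_of_lt hru)
    hCl hCu
  have hSl : -(3 * ε) ≤ t1 + t2 + t3 := by linarith
  have hSu : t1 + t2 + t3 ≤ 3 * ε := by linarith
  have hrS := mul_abs_le (x := r) (X := 1.8) (Y := 3 * ε) (by linarith) (le_of_lt hru)
    hSl hSu
  have hQl : -(97 * ε ^ 2) ≤ (-6*t1^2 - 6*t2^2 - 6*t3^2 + 24*(t1*t2) + 24*(t1*t3) + 24*(t2*t3)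
      + 4*(r*(t1*t2^2 + t2*t1^2 + t1*t3^2 + t3*t1^2 + t2*t3^2 + t3*t2^2 - t1^3 - t2^3 - t3^3))
      - t1^4 - t2^4 - t3^4 + 2*(t1^2*t2^2) + 2*(t1^2*t3^2) + 2*(t2^2*t3^2)) := by
    linarith [hp12.1, hp13.1, hp23.1, hrC.1, he3, he4]
  have hQu : (-6*t1^2 - 6*t2^2 - 6*t3^2 + 24*(t1*t2) + 24*(t1*t3) + 24*(t2*t3)
      + 4*(r*(t1*t2^2 + t2*t1^2 + t1*t3^2 + t3*t1^2 + t2*t3^2 + t3*t2^2 - t1^3 - t2^3 - t3^3))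
      - t1^4 - t2^4 - t3^4 + 2*(t1^2*t2^2) + 2*(t1^2*t3^2) + 2*(t2^2*t3^2)) ≤ 97 * ε ^ 2 := by
    linarith [hp12.2, hp13.2, hp23.2, hrC.2, he3, he4]
  have hPl : -(75 * ε) ≤ 12 * (r * (t1 + t2 + t3)) + (-6*t1^2 - 6*t2^2 - 6*t3^2 + 24*(t1*t2) + 24*(t1*t3) + 24*(t2*t3)
      + 4*(r*(t1*t2^2 + t2*t1^2 + t1*t3^2 + t3*t1^2 + t2*t3^2 + t3*t2^2 - t1^3 - t2^3 - t3^3))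
      - t1^4 - t2^4 - t3^4 + 2*(t1^2*t2^2) + 2*(t1^2*t3^2) + 2*(t2^2*t3^2)) := by
    linarith [hrS.1, hQl, he2, hε]
  have hPu : 12 * (r * (t1 + t2 + t3)) + (-6*t1^2 - 6*t2^2 - 6*t3^2 + 24*(t1*t2) + 24*(t1*t3) + 24*(t2*t3)
      + 4*(r*(t1*t2^2 + t2*t1^2 + t1*t3^2 + t3*t1^2 + t2*t3^2 + t3*t2^2 - t1^3 - t2^3 - t3^3))
      - t1^4 - t2^4 - t3^4 + 2*(t1^2*t2^2) + 2*(t1^2*t3^2) + 2*(t2^2*t3^2)) ≤ 75 * ε := by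
    linarith [hrS.2, hQu, he2, hε]
  have hPsq := sq_bnd hPl hPu
  have hP : (((r+t1) + (r+t2) + (r+t3)) * (-(r+t1) + (r+t2) + (r+t3))
      * ((r+t1) - (r+t2) + (r+t3)) * ((r+t1) + (r+t2) - (r+t3)))
      = 27 + 12 * (r * (t1 + t2 + t3)) + (-6*t1^2 - 6*t2^2 - 6*t3^2 + 24*(t1*t2) + 24*(t1*t3) + 24*(t2*t3)
      + 4*(r*(t1*t2^2 + t2*t1^2 + t1*t3^2 + t3*t1^2 + t2*t3^2 + t3*t2^2 - t1^3 - t2^3 - t3^3))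
      - t1^4 - t2^4 - t3^4 + 2*(t1^2*t2^2) + 2*(t1^2*t3^2) + 2*(t2^2*t3^2)) := by
    linear_combination (3*r^2 + 4*r*(t1+t2+t3) - 2*(t1^2+t2^2+t3^2)
      + 8*(t1*t2+t1*t3+t2*t3) + 9) * hr2
  have hXnn : 0 ≤ (((r+t1) + (r+t2) + (r+t3)) * (-(r+t1) + (r+t2) + (r+t3))
      * ((r+t1) - (r+t2) + (r+t3)) * ((r+t1) + (r+t2) - (r+t3))) := by
    have f1 : (0:ℝ) ≤ (r+t1) + (r+t2) + (r+t3) := by linarith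
    have f2 : (0:ℝ) ≤ -(r+t1) + (r+t2) + (r+t3) := by linarith
    have f3 : (0:ℝ) ≤ (r+t1) - (r+t2) + (r+t3) := by linarith
    have f4 : (0:ℝ) ≤ (r+t1) + (r+t2) - (r+t3) := by linarith
    exact mul_nonneg (mul_nonneg (mul_nonneg f1 f2) f3) f4
  have hcond : 27 * ((((r+t1) + (r+t2) + (r+t3)) * (-(r+t1) + (r+t2) + (r+t3))
      * ((r+t1) - (r+t2) + (r+t3)) * ((r+t1) + (r+t2) - (r+t3))) - 27)
      - ((((r+t1) + (r+t2) + (r+t3)) * (-(r+t1) + (r+t2) + (r+t3))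
      * ((r+t1) - (r+t2) + (r+t3)) * ((r+t1) + (r+t2) - (r+t3))) - 27) ^ 2
      ≥ 2 * 27 * Real.sqrt 27 * (2 * (t1 + t2 + t3) - 35 * ε ^ 2) := by
    rw [h27, hP]
    have hrhs : 2 * 27 * (3 * r) * (2 * (t1 + t2 + t3) - 35 * ε ^ 2)
        = 324 * (r * (t1 + t2 + t3)) - 5670 * (r * ε ^ 2) := by ring
    rw [hrhs]
    have hexp : 27 * (27 + 12 * (r * (t1 + t2 + t3)) + (-6*t1^2 - 6*t2^2 - 6*t3^2 + 24*(t1*t2) + 24*(t1*t3) + 24*(t2*t3)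
      + 4*(r*(t1*t2^2 + t2*t1^2 + t1*t3^2 + t3*t1^2 + t2*t3^2 + t3*t2^2 - t1^3 - t2^3 - t3^3))
      - t1^4 - t2^4 - t3^4 + 2*(t1^2*t2^2) + 2*(t1^2*t3^2) + 2*(t2^2*t3^2)) - 27)
        - (27 + 12 * (r * (t1 + t2 + t3)) + (-6*t1^2 - 6*t2^2 - 6*t3^2 + 24*(t1*t2) + 24*(t1*t3) + 24*(t2*t3)
      + 4*(r*(t1*t2^2 + t2*t1^2 + t1*t3^2 + t3*t1^2 + t2*t3^2 + t3*t2^2 - t1^3 - t2^3 - t3^3))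
      - t1^4 - t2^4 - t3^4 + 2*(t1^2*t2^2) + 2*(t1^2*t3^2) + 2*(t2^2*t3^2)) - 27) ^ 2
        = 324 * (r * (t1 + t2 + t3)) + 27 * ((-6*t1^2 - 6*t2^2 - 6*t3^2 + 24*(t1*t2) + 24*(t1*t3) + 24*(t2*t3)
      + 4*(r*(t1*t2^2 + t2*t1^2 + t1*t3^2 + t3*t1^2 + t2*t3^2 + t3*t2^2 - t1^3 - t2^3 - t3^3))
      - t1^4 - t2^4 - t3^4 + 2*(t1^2*t2^2) + 2*(t1^2*t3^2) + 2*(t2^2*t3^2)))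
          - (12 * (r * (t1 + t2 + t3)) + (-6*t1^2 - 6*t2^2 - 6*t3^2 + 24*(t1*t2) + 24*(t1*t3) + 24*(t2*t3)
      + 4*(r*(t1*t2^2 + t2*t1^2 + t1*t3^2 + t3*t1^2 + t2*t3^2 + t3*t2^2 - t1^3 - t2^3 - t3^3))
      - t1^4 - t2^4 - t3^4 + 2*(t1^2*t2^2) + 2*(t1^2*t3^2) + 2*(t2^2*t3^2))) ^ 2 := by ring
    rw [hexp]
    linarith [hPsq, hQl, hre2]
  have hfin := sqrt_lb _ 27 (2 * (t1 + t2 + t3) - 35 * ε ^ 2) hXnn (by norm_num) hcond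
  rw [h27] at hfin
  linarith

/-- There are constants `c > 0` and `ε₀ > 0` such that for all `0 < ε < ε₀` and all
`d₁, d₂, d₃ ∈ [√3 - ε, √3 + ε]`, one has `F(d₁, d₂, d₃) ≥ 3√3/2 - c·ε²`. -/
theorem hexagonArea_ge_near_regular :
    ∃ c > (0 : ℝ), ∃ ε₀ > (0 : ℝ), ∀ ε : ℝ, 0 < ε → ε < ε₀ →
      ∀ d₁ d₂ d₃ : ℝ,
        d₁ ∈ Set.Icc (Real.sqrt 3 - ε) (Real.sqrt 3 + ε) →
        d₂ ∈ Set.Icc (Real.sqrt 3 - ε) (Real.sqrt 3 + ε) →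
        d₃ ∈ Set.Icc (Real.sqrt 3 - ε) (Real.sqrt 3 + ε) →
        hexagonArea d₁ d₂ d₃ ≥ 3 * Real.sqrt 3 / 2 - c * ε ^ 2 := by
  refine ⟨100, by norm_num, 1 / 10, by norm_num, ?_⟩
  intro ε hε hε0 d₁ d₂ d₃ hd1 hd2 hd3
  have hr2 : Real.sqrt 3 ^ 2 = 3 := Real.sq_sqrt (by norm_num)
  have hrl : (1.7:ℝ) < Real.sqrt 3 := by nlinarith [Real.sqrt_nonneg 3, hr2]
  have hru : Real.sqrt 3 < 1.8 := by nlinarith [Real.sqrt_nonneg 3, hr2]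
  have g1 := gterm (Real.sqrt 3) ε d₁ hr2 hrl hru hε hε0 hd1.1 hd1.2
  have g2 := gterm (Real.sqrt 3) ε d₂ hr2 hrl hru hε hε0 hd2.1 hd2.2
  have g3 := gterm (Real.sqrt 3) ε d₃ hr2 hrl hru hε hε0 hd3.1 hd3.2
  have gH := hterm (Real.sqrt 3) ε d₁ d₂ d₃ hr2 hrl hru hε hε0 hd1.1 hd1.2 hd2.1 hd2.2
    hd3.1 hd3.2
  have hesq : 0 ≤ ε ^ 2 := sq_nonneg ε
  unfold hexagonArea
  linarith
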